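/- Let C be the Cantor space ℕ → Bool with the product topology, and let t = (t_n : n ∈ ℕ) be a sequence of pairwise disjoint finite sets of open subsets of C such that each t_n covers C. Then for every n ∈ ℕ, the set D_n := {p ∈ P(t) : n ∈ dom p} is a dense open subset of the partially ordered set P(t). -/

import Mathlib

open scoped Classical

/-- The standard interval partition `ζ` of `ℕ`: `[n]_ζ = [n(n+1)/2, (n+1)(n+2)/2)`. -/
def zetaBlock (n : ℕ) : Finset ℕ := Finset.Ico (n * (n + 1) / 2) ((n + 1) * (n + 2) / 2)

/-- Partial functions on `ℕ` are encoded as `p : ℕ → Option α`, where `p k = none`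
means `k ∉ dom p`.  The gap-counting function of `p` is `𝔤_p n = |[n]_ζ \ dom p|`. -/
noncomputable def gapCount {α : Type*} (p : ℕ → Option α) (n : ℕ) : ℕ :=
  ((zetaBlock n).filter fun k => p k = none).card

/-- A function `g : ℕ → ℕ` is staggered divergent if it is non-decreasing and
tends to infinity. -/
def StaggeredDivergent (g : ℕ → ℕ) : Prop :=
  Monotone g ∧ Filter.Tendsto g Filter.atTop Filter.atTop

/-- `p` is a condition of the forcing notion `P(t)`: a partial `t`-selector (a partial
function on `ℕ`, with `p n ∈ t n` whenever `n ∈ dom p`) whose gap-counting function is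
staggered divergent. -/
def MemP {α : Type*} (t : ℕ → Finset α) (p : ℕ → Option α) : Prop :=
  (∀ n a, p n = some a → a ∈ t n) ∧ (∃ n, p n = none) ∧ StaggeredDivergent (gapCount p)

/-- `p ≤ q` in `P(t)`: the graph of `p` contains the graph of `q`. -/
def ExtendsP {α : Type*} (p q : ℕ → Option α) : Prop :=
  ∀ k a, q k = some a → p k = some a

/-- For divergent `g`, `μ_n(g)` is the least `m` with `g m ≥ n`. -/
noncomputable def mu (g : ℕ → ℕ) (n : ℕ) : ℕ := sInf {m | n ≤ g m}

/-- `p ≤_n q` iff `p ≤ q` and `[i]_ζ \ dom q = [i]_ζ \ dom p` for all `i ≤ μ_n(𝔤_q)`. -/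
def ExtendsPn {α : Type*} (n : ℕ) (p q : ℕ → Option α) : Prop :=
  ExtendsP p q ∧ ∀ i ≤ mu (gapCount q) n, ∀ k ∈ zetaBlock i, (q k = none ↔ p k = none)

/-! ### Auxiliary lemmas about the interval partition -/

/-- Left endpoint of `[i]_ζ`. -/
def lbz (i : ℕ) : ℕ := i * (i + 1) / 2

lemma lbz_succ (i : ℕ) : lbz (i + 1) = lbz i + (i + 1) := by
  unfold lbz
  have h : (i + 1) * (i + 1 + 1) = i * (i + 1) + 2 * (i + 1) := by ring
  rw [h, Nat.add_mul_div_left _ _ (by norm_num : (0:ℕ) < 2)]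

lemma mem_zetaBlock {k i : ℕ} : k ∈ zetaBlock i ↔ lbz i ≤ k ∧ k < lbz (i + 1) := by
  have h : (i + 1) * (i + 2) = (i + 1) * (i + 1 + 1) := by ring
  unfold zetaBlock lbz
  rw [h, Finset.mem_Ico]

lemma lbz_mono : Monotone lbz := monotone_nat_of_le_succ fun i => by rw [lbz_succ]; omega

lemma exists_block (n : ℕ) : ∃ i, n ∈ zetaBlock i := by
  induction n with
  | zero =>
    refine ⟨0, mem_zetaBlock.mpr ?_⟩
    have := lbz_succ 0
    unfold lbz at *
    omega
  | succ n ih =>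
    obtain ⟨i, hi⟩ := ih
    rw [mem_zetaBlock] at hi
    by_cases h : n + 1 < lbz (i + 1)
    · exact ⟨i, mem_zetaBlock.mpr ⟨by omega, h⟩⟩
    · refine ⟨i + 1, mem_zetaBlock.mpr ?_⟩
      have h2 := lbz_succ (i + 1)
      omega

lemma zeta_disj {i j k : ℕ} (hij : i ≠ j) (h1 : k ∈ zetaBlock i) (h2 : k ∈ zetaBlock j) :
    False := by
  rw [mem_zetaBlock] at h1 h2
  rcases lt_or_gt_of_ne hij with h | h
  · have := lbz_mono (show i + 1 ≤ j by omega); omega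
  · have := lbz_mono (show j + 1 ≤ i by omega); omega

/-- Let `t` be a sequence of pairwise disjoint finite sets of open subsets of the Cantor
space, each covering the Cantor space.  For every `n`, the set
`D_n = {p ∈ P(t) : n ∈ dom p}` is a dense open subset of `P(t)`. -/
theorem denseOpen_Dn (t : ℕ → Finset (Set (ℕ → Bool)))
    (hopen : ∀ n, ∀ U ∈ t n, IsOpen U)
    (hcover : ∀ n, ⋃₀ (t n : Set (Set (ℕ → Bool))) = Set.univ)
    (hdisj : Pairwise (Function.onFun Disjoint t)) (n : ℕ) :
    (∀ p q, MemP t p → MemP t q → ExtendsP q p → p n ≠ none → q n ≠ none) ∧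
    (∀ q, MemP t q → ∃ p, MemP t p ∧ ExtendsP p q ∧ p n ≠ none) := by
  constructor
  · -- openness
    intro p q _ _ hqp hpn
    obtain ⟨a, ha⟩ := Option.ne_none_iff_exists'.mp hpn
    simp [hqp n a ha]
  · -- density
    intro q hq
    by_cases hqn : q n = none
    swap
    · exact ⟨q, hq, fun k a h => h, hqn⟩
    obtain ⟨i0, hi0⟩ := exists_block n
    have hpick : ∀ k, ∃ a, a ∈ t k := by
      intro k
      have hx : (fun _ => false : ℕ → Bool) ∈ ⋃₀ (↑(t k) : Set (Set (ℕ → Bool))) := by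
        rw [hcover k]; trivial
      obtain ⟨U, hU, -⟩ := hx
      exact ⟨U, hU⟩
    set Fill : ℕ → Prop := fun k => k = n ∨ ∃ i, i < i0 ∧ k ∈ zetaBlock i ∧ q k = none ∧
      ∀ j ∈ zetaBlock i, q j = none → k ≤ j with hFill
    set p : ℕ → Option (Set (ℕ → Bool)) := fun k =>
      if Fill k then some (hpick k).choose else q k with hp
    have hFill_none : ∀ k, Fill k → q k = none := by
      intro k hk
      rcases hk with rfl | ⟨i, _, _, h, _⟩
      · exact hqn
      · exact h
    have hpk_some : ∀ k, Fill k → p k = some (hpick k).choose := by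
      intro k hk; simp only [hp]; exact if_pos hk
    have hpk_not : ∀ k, ¬ Fill k → p k = q k := by
      intro k hk; simp only [hp]; exact if_neg hk
    have hext : ExtendsP p q := by
      intro k a h
      rw [hpk_not k, h]
      intro hk
      rw [hFill_none k hk] at h
      cases h
    have hpnone : ∀ k, p k = none ↔ (q k = none ∧ ¬ Fill k) := by
      intro k
      by_cases hk : Fill k
      · rw [hpk_some k hk]; simp [hk]
      · rw [hpk_not k hk]; simp [hk]
    -- gap counts above the block of n are unchanged
    have hgt : ∀ i, i0 < i → gapCount p i = gapCount q i := by
      intro i hi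
      unfold gapCount
      apply congrArg
      apply Finset.filter_congr
      intro k hk
      have hnf : ¬ Fill k := by
        rintro (rfl | ⟨i', hi', hk', -, -⟩)
        · exact zeta_disj (by omega : i0 ≠ i) hi0 hk
        · exact zeta_disj (by omega : i' ≠ i) hk' hk
      rw [hpk_not k hnf]
    -- gap counts up to the block of n drop by exactly one (truncated)
    have hle : ∀ i, i ≤ i0 → gapCount p i = gapCount q i - 1 := by
      intro i hi
      by_cases hgap : ∃ k ∈ zetaBlock i, q k = none
      · obtain ⟨e, he_mem, he_none, heF, he_uniq⟩ :
            ∃ e, e ∈ zetaBlock i ∧ q e = none ∧ Fill e ∧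
              ∀ k ∈ zetaBlock i, Fill k → k = e := by
          rcases eq_or_lt_of_le hi with heq | hlt
          · subst heq
            refine ⟨n, hi0, hqn, Or.inl rfl, ?_⟩
            rintro k hk (rfl | ⟨i', hi', hk', -, -⟩)
            · rfl
            · exact (zeta_disj (by omega : i' ≠ i) hk' hk).elim
          · set s := (zetaBlock i).filter (fun k => q k = none) with hs
            have hne : s.Nonempty := by
              obtain ⟨k, hk, hkn⟩ := hgap
              exact ⟨k, Finset.mem_filter.mpr ⟨hk, hkn⟩⟩
            set e := s.min' hne with he
            have he_mem' := s.min'_mem hne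
            rw [Finset.mem_filter] at he_mem'
            refine ⟨e, he_mem'.1, he_mem'.2, ?_, ?_⟩
            · exact Or.inr ⟨i, hlt, he_mem'.1, he_mem'.2,
                fun j hj hjn => s.min'_le j (Finset.mem_filter.mpr ⟨hj, hjn⟩)⟩
            · rintro k hk (rfl | ⟨i', hi', hk', hkn, hleast⟩)
              · exact (zeta_disj (by omega : i ≠ i0) hk hi0).elim
              · have hii : i' = i := by
                  by_contra hne'
                  exact zeta_disj hne' hk' hk
                subst hii
                have h1 : k ≤ e := hleast e he_mem'.1 he_mem'.2
                have h2 : e ≤ k := s.min'_le k (Finset.mem_filter.mpr ⟨hk, hkn⟩)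
                omega
        have hfp : (zetaBlock i).filter (fun k => p k = none) =
            ((zetaBlock i).filter (fun k => q k = none)).erase e := by
          ext k
          simp only [Finset.mem_erase, Finset.mem_filter, hpnone]
          constructor
          · rintro ⟨hk, hkn, hnf⟩
            exact ⟨fun h => hnf (h ▸ heF), hk, hkn⟩
          · rintro ⟨hne', hk, hkn⟩
            exact ⟨hk, hkn, fun hf => hne' (he_uniq k hk hf)⟩
        unfold gapCount
        rw [hfp, Finset.card_erase_of_mem (Finset.mem_filter.mpr ⟨he_mem, he_none⟩)]
      · push_neg at hgap
        have h1 : gapCount q i = 0 := by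
          unfold gapCount
          rw [Finset.card_eq_zero, Finset.filter_eq_empty_iff]
          exact hgap
        have h2 : gapCount p i = 0 := by
          unfold gapCount
          rw [Finset.card_eq_zero, Finset.filter_eq_empty_iff]
          intro k hk hkn
          exact hgap k hk ((hpnone k).mp hkn).1
        omega
    have hmono : Monotone (gapCount p) := by
      apply monotone_nat_of_le_succ
      intro i
      rcases lt_or_ge i0 i with h | h
      · rw [hgt i h, hgt (i + 1) (by omega)]
        exact hq.2.2.1 (Nat.le_succ i)
      · rw [hle i h]
        rcases lt_or_ge i0 (i + 1) with h2 | h2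
        · rw [hgt (i + 1) h2]
          exact le_trans (Nat.sub_le _ _) (hq.2.2.1 (Nat.le_succ i))
        · rw [hle (i + 1) h2]
          exact Nat.sub_le_sub_right (hq.2.2.1 (Nat.le_succ i)) 1
    have htend : Filter.Tendsto (gapCount p) Filter.atTop Filter.atTop := by
      apply hq.2.2.2.congr'
      filter_upwards [Filter.eventually_gt_atTop i0] with i hi
      exact (hgt i hi).symm
    have hex : ∃ m, p m = none := by
      obtain ⟨i, hi⟩ := (htend.eventually_ge_atTop 1).exists
      have hcar : (0:ℕ) < ((zetaBlock i).filter fun k => p k = none).card := hi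
      obtain ⟨k, hk⟩ := Finset.card_pos.mp hcar
      exact ⟨k, (Finset.mem_filter.mp hk).2⟩
    refine ⟨p, ⟨?_, hex, hmono, htend⟩, hext, ?_⟩
    · intro k a h
      by_cases hk : Fill k
      · rw [hpk_some k hk] at h
        cases h
        exact (hpick k).choose_spec
      · rw [hpk_not k hk] at h
        exact hq.1 k a h
    · rw [hpk_some n (Or.inl rfl)]
      simp
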